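/- The Jacobian of the Prony map factorizes as J_P(x) = U(ξ_1, l_1+1, …, ξ_n, l_n+1) · diag(D_1,…,D_n), where U(ξ_1, l_1+1, …, ξ_n, l_n+1) is the R×R confluent Vandermonde matrix with multiplicities increased by one, and D_i is the (l_i+1)×(l_i+1) complex matrix equal to the identity except for its last column, which equals (0, a_{i,0}, a_{i,1},…,a_{i,l_i−1})^T. -/

import Mathlib

open scoped BigOperators

noncomputable section

/-- Offset of the `i`-th block of columns: the sum of the multiplicities of all previous blocks. -/
def blockOff {n : ℕ} (L : Fin n → ℕ) (i : Fin n) : ℕ := ∑ i' ∈ Finset.Iio i, L i'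

theorem blockOff_add_lt {n : ℕ} (L : Fin n → ℕ) (i : Fin n) {j : ℕ} (hj : j < L i) :
    blockOff L i + j < ∑ i', L i' := by
  have h1 : ∑ i' ∈ insert i (Finset.Iio i), L i' = ∑ i' ∈ Finset.Iio i, L i' + L i := by
    rw [Finset.sum_insert (by simp)]; ring
  have h2 : ∑ i' ∈ insert i (Finset.Iio i), L i' ≤ ∑ i', L i' :=
    Finset.sum_le_sum_of_subset (Finset.subset_univ _)
  unfold blockOff
  omega

/-- The flattened index of position `j` inside block `i`, when block `i` has size `L i`. -/
def encC {n : ℕ} (L : Fin n → ℕ) (i : Fin n) (j : Fin (L i)) : Fin (∑ i', L i') :=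
  ⟨blockOff L i + j, blockOff_add_lt L i j.isLt⟩

/-- The (square) confluent Vandermonde matrix on nodes `ξ_i` with multiplicities `L i`:
rows are indexed by `k = 0,…,(∑ L i)−1`; the entry in row `k` and column `j` of block `i`
is `(k)_j ξ_i^{k−j}` (zero when `j > k`). -/
def confVand {n : ℕ} (L : Fin n → ℕ) (ξ : Fin n → ℂ) :
    Matrix (Fin (∑ i, L i)) (Fin (∑ i, L i)) ℂ :=
  fun k c => ∑ i, ∑ j : Fin (L i),
    if c = encC L i j then ((k : ℕ).descFactorial j : ℂ) * ξ i ^ ((k : ℕ) - (j : ℕ)) else 0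

/-- The index (in the parameter vector) of the magnitude `a_{i,j}` (`j < l i`) or,
for `j = l i`, of the node `ξ_i`; the parameters are ordered
`(a_{1,0},…,a_{1,l_1−1}, ξ_1, …, a_{n,0},…,a_{n,l_n−1}, ξ_n)`. -/
def encP {n : ℕ} (l : Fin n → ℕ) (i : Fin n) (j : Fin (l i + 1)) :
    Fin (∑ i', (l i' + 1)) :=
  encC (fun i' => l i' + 1) i j

/-- The parameter vector `x = (a_{1,0},…,a_{1,l_1−1}, ξ_1, …, a_{n,0},…,a_{n,l_n−1}, ξ_n)`. -/
def pronyParam {n : ℕ} (l : Fin n → ℕ) (ξ : Fin n → ℂ)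
    (a : (i : Fin n) → Fin (l i) → ℂ) : Fin (∑ i', (l i' + 1)) → ℂ :=
  fun p => ∑ i, ∑ j : Fin (l i + 1),
    if p = encP l i j then (if h : (j : ℕ) < l i then a i ⟨j, h⟩ else ξ i) else 0

/-- The Prony map `P : ℂ^R → ℂ^R` sending the parameter vector
`x = (a_{1,0},…,a_{1,l_1−1}, ξ_1, …, a_{n,0},…,a_{n,l_n−1}, ξ_n)` to the moment vector
`(m_0,…,m_{R−1})`, `m_k = Σ_i Σ_{j<l_i} a_{i,j} (k)_j ξ_i^{k−j}`. -/
def pronyMap {n : ℕ} (l : Fin n → ℕ) (x : Fin (∑ i', (l i' + 1)) → ℂ) :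
    Fin (∑ i', (l i' + 1)) → ℂ :=
  fun k => ∑ i, ∑ j : Fin (l i),
    x (encP l i (Fin.castSucc j)) * ((k : ℕ).descFactorial j : ℂ) *
      (x (encP l i (Fin.last (l i)))) ^ ((k : ℕ) - (j : ℕ))

/-- The Jacobian matrix of the Prony map at `x`: the `(k,p)` entry is the partial
derivative of the `k`-th moment with respect to the `p`-th parameter. -/
def pronyJacobian {n : ℕ} (l : Fin n → ℕ) (x : Fin (∑ i', (l i' + 1)) → ℂ) :
    Matrix (Fin (∑ i', (l i' + 1))) (Fin (∑ i', (l i' + 1))) ℂ :=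
  fun k p => deriv (fun t : ℂ => pronyMap l (Function.update x p t) k) (x p)

/-- The block-diagonal matrix `diag(D_1,…,D_n)`, where `D_i` is the `(l_i+1)×(l_i+1)`
identity matrix except for its last column, which is `(0, a_{i,0}, …, a_{i,l_i−1})ᵀ`. -/
def diagD {n : ℕ} (l : Fin n → ℕ) (a : (i : Fin n) → Fin (l i) → ℂ) :
    Matrix (Fin (∑ i', (l i' + 1))) (Fin (∑ i', (l i' + 1))) ℂ :=
  fun r c => ∑ i, ∑ s : Fin (l i + 1), ∑ t : Fin (l i + 1),
    if r = encP l i s ∧ c = encP l i t then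
      (if (t : ℕ) = l i then
        (if hs : (s : ℕ) = 0 then 0 else a i ⟨(s : ℕ) - 1, by have := s.isLt; omega⟩)
      else if (s : ℕ) = (t : ℕ) then 1 else 0)
    else 0

lemma blockOff_mono {n : ℕ} (L : Fin n → ℕ) {i i' : Fin n} (h : i < i') :
    blockOff L i + L i ≤ blockOff L i' := by
  have hsub : insert i (Finset.Iio i) ⊆ Finset.Iio i' := by
    intro x hx
    simp only [Finset.mem_insert, Finset.mem_Iio] at hx ⊢
    rcases hx with rfl | hx
    · exact h
    · exact hx.trans h
  have hle := Finset.sum_le_sum_of_subset (f := L) hsub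
  rw [Finset.sum_insert (by simp)] at hle
  unfold blockOff
  omega

lemma encC_eq_iff {n : ℕ} {L : Fin n → ℕ} {i i' : Fin n} {j : Fin (L i)} {j' : Fin (L i')} :
    encC L i j = encC L i' j' ↔ i = i' ∧ (j : ℕ) = (j' : ℕ) := by
  constructor
  · intro h
    have hv : blockOff L i + (j : ℕ) = blockOff L i' + (j' : ℕ) := by
      have := congrArg Fin.val h; simpa [encC] using this
    have hii : i = i' := by
      by_contra hne
      rcases lt_or_gt_of_ne hne with hlt | hlt
      · have h1 := blockOff_mono L hlt; have h2 := j.isLt; omega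
      · have h1 := blockOff_mono L hlt; have h2 := j'.isLt; omega
    subst hii
    exact ⟨rfl, by omega⟩
  · rintro ⟨rfl, h⟩
    apply Fin.ext
    simp [encC, h]

lemma encC_surj {n : ℕ} (L : Fin n → ℕ) (c : Fin (∑ i, L i)) :
    ∃ i j, c = encC L i j := by
  have hbij : Function.Bijective (fun q : Σ i, Fin (L i) => encC L q.1 q.2) := by
    rw [Fintype.bijective_iff_injective_and_card]
    constructor
    · rintro ⟨i, j⟩ ⟨i', j'⟩ h
      obtain ⟨rfl, hv⟩ := encC_eq_iff.1 h
      simp [Fin.val_eq_val] at hv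
      simp [hv]
    · simp
  obtain ⟨⟨i, j⟩, h⟩ := hbij.2 c
  exact ⟨i, j, h.symm⟩

lemma encC_bijective {n : ℕ} (L : Fin n → ℕ) :
    Function.Bijective (fun q : Σ i, Fin (L i) => encC L q.1 q.2) := by
  rw [Fintype.bijective_iff_injective_and_card]
  constructor
  · rintro ⟨i, j⟩ ⟨i', j'⟩ h
    obtain ⟨rfl, hv⟩ := encC_eq_iff.1 h
    simp [Fin.val_eq_val] at hv
    simp [hv]
  · simp

/-- Summing an indicator over all (block, position) pairs picks the single term. -/
lemma sum_sum_ite {n : ℕ} {L : Fin n → ℕ} (f : (i : Fin n) → Fin (L i) → ℂ)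
    (i₁ : Fin n) (j₁ : Fin (L i₁)) :
    (∑ i, ∑ j : Fin (L i), if i₁ = i ∧ (j₁ : ℕ) = (j : ℕ) then f i j else 0) = f i₁ j₁ := by
  rw [Finset.sum_eq_single i₁]
  · simp [Fin.val_eq_val]
  · intro b _ hb
    exact Finset.sum_eq_zero fun j _ => if_neg (by rintro ⟨rfl, -⟩; exact hb rfl)
  · simp

lemma sum_sum_ite' {n : ℕ} {L : Fin n → ℕ} (f : (i : Fin n) → Fin (L i) → ℂ)
    (i₁ : Fin n) (j₁ : Fin (L i₁)) :
    (∑ i, ∑ j : Fin (L i), if i = i₁ ∧ (j : ℕ) = (j₁ : ℕ) then f i j else 0) = f i₁ j₁ := by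
  rw [← sum_sum_ite f i₁ j₁]
  refine Finset.sum_congr rfl fun i _ => Finset.sum_congr rfl fun j _ => ?_
  congr 1
  rw [eq_iff_iff]
  constructor <;> (rintro ⟨h1, h2⟩; exact ⟨h1.symm, h2.symm⟩)

lemma sum_encC {n : ℕ} (L : Fin n → ℕ) (f : (i : Fin n) → Fin (L i) → ℂ)
    (i₀ : Fin n) (j₀ : Fin (L i₀)) :
    (∑ i, ∑ j : Fin (L i), if encC L i₀ j₀ = encC L i j then f i j else 0) = f i₀ j₀ := by
  simp only [encC_eq_iff]
  exact sum_sum_ite f i₀ j₀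

lemma confVand_apply {n : ℕ} (L : Fin n → ℕ) (ξ : Fin n → ℂ) (k : Fin (∑ i, L i))
    (i : Fin n) (s : Fin (L i)) :
    confVand L ξ k (encC L i s) = ((k : ℕ).descFactorial s : ℂ) * ξ i ^ ((k : ℕ) - (s : ℕ)) :=
  sum_encC L _ i s

lemma pronyParam_apply {n : ℕ} (l : Fin n → ℕ) (ξ : Fin n → ℂ)
    (a : (i : Fin n) → Fin (l i) → ℂ) (i : Fin n) (j : Fin (l i + 1)) :
    pronyParam l ξ a (encP l i j) = if h : (j : ℕ) < l i then a i ⟨j, h⟩ else ξ i :=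
  sum_encC (fun i' => l i' + 1) _ i j

lemma pronyParam_a {n : ℕ} (l : Fin n → ℕ) (ξ : Fin n → ℂ)
    (a : (i : Fin n) → Fin (l i) → ℂ) (i : Fin n) (j : Fin (l i)) :
    pronyParam l ξ a (encP l i (Fin.castSucc j)) = a i j := by
  rw [pronyParam_apply, dif_pos (by simp [j.isLt])]
  congr 1

lemma pronyParam_xi {n : ℕ} (l : Fin n → ℕ) (ξ : Fin n → ℂ)
    (a : (i : Fin n) → Fin (l i) → ℂ) (i : Fin n) :
    pronyParam l ξ a (encP l i (Fin.last (l i))) = ξ i := by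
  rw [pronyParam_apply, dif_neg (by simp)]

lemma diagD_apply {n : ℕ} (l : Fin n → ℕ) (a : (i : Fin n) → Fin (l i) → ℂ)
    (i i₁ : Fin n) (s : Fin (l i + 1)) (t₀ : Fin (l i₁ + 1)) :
    diagD l a (encP l i s) (encP l i₁ t₀) =
      if i = i₁ then
        (if (t₀ : ℕ) = l i then
          (if _hs : (s : ℕ) = 0 then 0 else a i ⟨(s : ℕ) - 1, by have := s.isLt; omega⟩)
        else if (s : ℕ) = (t₀ : ℕ) then 1 else 0)
      else 0 := by
  unfold diagD
  simp only [encP, encC_eq_iff]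
  by_cases hi : i = i₁
  · subst hi
    rw [if_pos rfl, Finset.sum_eq_single i]
    · simp only [true_and]
      rw [Finset.sum_eq_single s]
      · rw [Finset.sum_eq_single t₀]
        · simp
        · intro t' _ ht'; exact if_neg (by rintro ⟨-, h⟩; exact ht' (Fin.ext h.symm))
        · simp
      · intro s' _ hs'
        exact Finset.sum_eq_zero fun t' _ => if_neg (by rintro ⟨h, -⟩; exact hs' (Fin.ext h.symm))
      · simp
    · intro b _ hb
      refine Finset.sum_eq_zero fun s' _ => Finset.sum_eq_zero fun t' _ => if_neg ?_
      rintro ⟨⟨h, -⟩, -⟩; exact hb h.symm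
    · simp
  · rw [if_neg hi]
    refine Finset.sum_eq_zero fun i' _ => Finset.sum_eq_zero fun s' _ =>
      Finset.sum_eq_zero fun t' _ => if_neg ?_
    rintro ⟨⟨h1, -⟩, h2, -⟩; exact hi (h1.trans h2.symm)

lemma rhs_eval {n : ℕ} (l : Fin n → ℕ) (ξ : Fin n → ℂ) (a : (i : Fin n) → Fin (l i) → ℂ)
    (k : Fin (∑ i', (l i' + 1))) (i₁ : Fin n) (t₀ : Fin (l i₁ + 1)) :
    (confVand (fun i => l i + 1) ξ * diagD l a) k (encP l i₁ t₀) =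
      ∑ s : Fin (l i₁ + 1), ((k : ℕ).descFactorial s : ℂ) * ξ i₁ ^ ((k : ℕ) - (s : ℕ)) *
        (if (t₀ : ℕ) = l i₁ then
          (if _hs : (s : ℕ) = 0 then 0 else a i₁ ⟨(s : ℕ) - 1, by have := s.isLt; omega⟩)
        else if (s : ℕ) = (t₀ : ℕ) then 1 else 0) := by
  rw [Matrix.mul_apply]
  rw [← Fintype.sum_bijective _ (encC_bijective (fun i => l i + 1))
      (fun q : Σ i, Fin (l i + 1) =>
        confVand (fun i => l i + 1) ξ k (encC (fun i => l i + 1) q.1 q.2) *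
          diagD l a (encC (fun i => l i + 1) q.1 q.2) (encP l i₁ t₀))
      _ (fun _ => rfl)]
  rw [← Finset.univ_sigma_univ, Finset.sum_sigma]
  simp only [confVand_apply]
  have hDD : ∀ (i : Fin n) (s : Fin (l i + 1)),
      diagD l a (encC (fun i' => l i' + 1) i s) (encP l i₁ t₀) =
        if i = i₁ then
          (if (t₀ : ℕ) = l i then
            (if _hs : (s : ℕ) = 0 then 0 else a i ⟨(s : ℕ) - 1, by have := s.isLt; omega⟩)
          else if (s : ℕ) = (t₀ : ℕ) then 1 else 0)
        else 0 := fun i s => diagD_apply l a i i₁ s t₀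
  simp only [hDD]
  rw [Finset.sum_eq_single i₁]
  · refine Finset.sum_congr rfl fun s _ => ?_
    rw [if_pos rfl]
  · intro b _ hb
    exact Finset.sum_eq_zero fun s _ => by rw [if_neg hb, mul_zero]
  · simp

/-- the Jacobian of the Prony map factorizes as
`J_P(x) = U(ξ_1,l_1+1,…,ξ_n,l_n+1) · diag(D_1,…,D_n)`. -/
theorem pronyJacobian_factorization
    (n : ℕ) (hn : 1 ≤ n) (l : Fin n → ℕ) (hl : ∀ i, 1 ≤ l i)
    (ξ : Fin n → ℂ) (a : (i : Fin n) → Fin (l i) → ℂ) :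
    pronyJacobian l (pronyParam l ξ a) =
      confVand (fun i => l i + 1) ξ * diagD l a := by
  ext k p
  obtain ⟨i₁, t₀, rfl⟩ := encC_surj (fun i' => l i' + 1) p
  have hp : encC (fun i' => l i' + 1) i₁ t₀ = encP l i₁ t₀ := rfl
  rw [hp, rhs_eval l ξ a k i₁ t₀]
  show deriv (fun t => pronyMap l (Function.update (pronyParam l ξ a) (encP l i₁ t₀) t) k)
      (pronyParam l ξ a (encP l i₁ t₀)) = _
  by_cases hB : (t₀ : ℕ) = l i₁
  · -- node case
    have ht : t₀ = Fin.last (l i₁) := Fin.ext (by simpa using hB)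
    subst ht
    rw [pronyParam_xi]
    have hder : HasDerivAt
        (fun t => pronyMap l (Function.update (pronyParam l ξ a) (encP l i₁ (Fin.last (l i₁))) t) k)
        (∑ i, ∑ j : Fin (l i),
          if i = i₁ then
            (a i j * ((k : ℕ).descFactorial j : ℂ)) *
              ((((k : ℕ) - (j : ℕ)) : ℕ) * ξ i₁ ^ ((k : ℕ) - (j : ℕ) - 1))
          else 0) (ξ i₁) := by
      unfold pronyMap
      apply HasDerivAt.fun_sum; intro i _
      apply HasDerivAt.fun_sum; intro j _
      have hcs : encP l i (Fin.castSucc j) ≠ encP l i₁ (Fin.last (l i₁)) := by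
        unfold encP; rw [Ne, encC_eq_iff]
        rintro ⟨rfl, h⟩
        simp only [Fin.coe_castSucc, Fin.val_last] at h
        have := j.isLt; omega
      simp only [Function.update_apply, if_neg hcs]
      by_cases hc : i = i₁
      · subst hc
        rw [if_pos rfl]
        simp only [eq_self_iff_true, if_true, pronyParam_a]
        exact (hasDerivAt_pow ((k : ℕ) - (j : ℕ)) (ξ i)).const_mul
          (a i j * ((k : ℕ).descFactorial j : ℂ))
      · rw [if_neg hc]
        have hne : encP l i (Fin.last (l i)) ≠ encP l i₁ (Fin.last (l i₁)) := by
          unfold encP; rw [Ne, encC_eq_iff]; rintro ⟨rfl, -⟩; exact hc rfl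
        simp only [if_neg hne]
        exact hasDerivAt_const _ _
    rw [hder.deriv]
    rw [Finset.sum_eq_single i₁]
    · -- LHS: sum over j of node derivative, RHS: if_pos hB branch
      simp only [if_pos rfl]
      have hBval : ((Fin.last (l i₁) : Fin (l i₁ + 1)) : ℕ) = l i₁ := rfl
      simp only [hBval, if_pos rfl]
      rw [Fin.sum_univ_succ]
      simp only [if_true, Fin.val_zero, Fin.val_succ]
      simp only [↓reduceDIte, mul_zero, zero_add]
      refine Finset.sum_congr rfl fun j _ => ?_
      rw [dif_neg (Nat.succ_ne_zero (j : ℕ))]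
      have ha : a i₁ ⟨(j : ℕ) + 1 - 1, by have := j.isLt; omega⟩ = a i₁ j := by
        congr 1
      rw [ha, Nat.descFactorial_succ, Nat.sub_sub]
      push_cast
      ring
    · intro b _ hb
      exact Finset.sum_eq_zero fun j _ => if_neg hb
    · simp
  · -- magnitude case
    have hA : (t₀ : ℕ) < l i₁ := by have := t₀.isLt; omega
    set j₁ : Fin (l i₁) := ⟨t₀, hA⟩ with hj₁
    have hder : HasDerivAt
        (fun t => pronyMap l (Function.update (pronyParam l ξ a) (encP l i₁ t₀) t) k)
        (∑ i, ∑ j : Fin (l i),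
          if i = i₁ ∧ (j : ℕ) = (t₀ : ℕ) then
            ((k : ℕ).descFactorial j : ℂ) * ξ i ^ ((k : ℕ) - (j : ℕ))
          else 0) (pronyParam l ξ a (encP l i₁ t₀)) := by
      unfold pronyMap
      apply HasDerivAt.fun_sum; intro i _
      apply HasDerivAt.fun_sum; intro j _
      have hlast : encP l i (Fin.last (l i)) ≠ encP l i₁ t₀ := by
        unfold encP; rw [Ne, encC_eq_iff]
        rintro ⟨rfl, h⟩
        simp only [Fin.val_last] at h
        omega
      simp only [Function.update_apply, if_neg hlast]
      by_cases hc : i = i₁ ∧ (j : ℕ) = (t₀ : ℕ)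
      · obtain ⟨rfl, hj⟩ := hc
        have hcs : encP l i (Fin.castSucc j) = encP l i t₀ := by
          unfold encP; exact encC_eq_iff.2 ⟨rfl, by simpa using hj⟩
        rw [if_pos (show i = i ∧ (j : ℕ) = (t₀ : ℕ) from ⟨rfl, hj⟩)]
        simp only [if_pos hcs, pronyParam_xi]
        simpa using ((hasDerivAt_id (pronyParam l ξ a (encP l i t₀))).mul_const
          (((k : ℕ).descFactorial j : ℂ))).mul_const (ξ i ^ ((k : ℕ) - (j : ℕ)))
      · rw [if_neg hc]
        have hcs : encP l i (Fin.castSucc j) ≠ encP l i₁ t₀ := by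
          unfold encP; rw [Ne, encC_eq_iff]
          rintro ⟨rfl, h⟩
          exact hc ⟨rfl, by simpa using h⟩
        simp only [if_neg hcs]
        exact hasDerivAt_const _ _
    rw [hder.deriv]
    have hLHS : (∑ i, ∑ j : Fin (l i),
        if i = i₁ ∧ (j : ℕ) = (t₀ : ℕ) then
          ((k : ℕ).descFactorial j : ℂ) * ξ i ^ ((k : ℕ) - (j : ℕ))
        else 0) =
        ((k : ℕ).descFactorial j₁ : ℂ) * ξ i₁ ^ ((k : ℕ) - (j₁ : ℕ)) :=
      sum_sum_ite' (fun i j => ((k : ℕ).descFactorial j : ℂ) * ξ i ^ ((k : ℕ) - (j : ℕ))) i₁ j₁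
    rw [hLHS]
    have hcond : ∀ s : Fin (l i₁ + 1), ((s : ℕ) = (t₀ : ℕ)) = (s = t₀) := fun s => by
      rw [Fin.val_eq_val]
    simp only [if_neg hB, hcond, mul_ite, mul_one, mul_zero, Finset.sum_ite_eq']
    simp [j₁]
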